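/- Assume m = 2. A voting rule is regret-free truth-telling if and only if it is an extended majority voting rule. -/

import Mathlib

open Function

/-- A preference: a bijection from positions (`0` = bottom/worst, `m-1` = top/best)
to alternatives.  `p k` is the alternative in the `(k+1)`-th position from the bottom. -/
abbrev Pref (m : ℕ) := Equiv.Perm (Fin m)

/-- A profile: one preference for each of the `n` agents. -/
abbrev Profile (n m : ℕ) := Fin n → Pref m

/-- `x` is strictly preferred to `y` under `p`. -/
def prefers {m : ℕ} (p : Pref m) (x y : Fin m) : Prop :=
  p.symm y < p.symm x

instance {m : ℕ} (p : Pref m) (x y : Fin m) : Decidable (prefers p x y) :=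
  inferInstanceAs (Decidable (p.symm y < p.symm x))

/-- `x` is the top (best) alternative of `p`. -/
def IsBest {m : ℕ} (p : Pref m) (x : Fin m) : Prop :=
  ∀ y, p.symm y ≤ p.symm x

instance {m : ℕ} (p : Pref m) (x : Fin m) : Decidable (IsBest p x) :=
  inferInstanceAs (Decidable (∀ y, p.symm y ≤ p.symm x))

/-- Regret-free truth-telling: whenever a misreport `Pi'` by agent `i` yields a strictly
better outcome, there is a subprofile of the others (a full profile `Pstar` agreeing with
`P` at `i`) consistent with the observed outcome at which the misreport does strictly worse. -/
def RFTT {n m : ℕ} (f : Profile n m → Fin m) : Prop :=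
  ∀ (i : Fin n) (P : Profile n m) (Pi' : Pref m),
    prefers (P i) (f (update P i Pi')) (f P) →
    ∃ Pstar : Profile n m, Pstar i = P i ∧ f Pstar = f P ∧
      prefers (P i) (f Pstar) (f (update Pstar i Pi'))

/-- Strategy-proofness: truth-telling yields a weakly better outcome. -/
def StrategyProof {n m : ℕ} (f : Profile n m → Fin m) : Prop :=
  ∀ (P : Profile n m) (i : Fin n) (Pi' : Pref m),
    f P = f (update P i Pi') ∨ prefers (P i) (f P) (f (update P i Pi'))

/-- Tops-only: the outcome only depends on the agents' top alternatives. -/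
def TopsOnly {n m : ℕ} (f : Profile n m → Fin m) : Prop :=
  ∀ P P' : Profile n m, (∀ i x, IsBest (P i) x ↔ IsBest (P' i) x) → f P = f P'

/-- Efficiency: no alternative is strictly preferred to the outcome by every agent. -/
def Efficient {n m : ℕ} (f : Profile n m → Fin m) : Prop :=
  ∀ P : Profile n m, ¬ ∃ y, ∀ i, prefers (P i) y (f P)

/-- Dictatorship: some agent always gets his top alternative. -/
def Dictatorial {n m : ℕ} (f : Profile n m → Fin m) : Prop :=
  ∃ i : Fin n, ∀ P : Profile n m, IsBest (P i) (f P)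

/-- Anonymity: invariance under permutations of the agents. -/
def Anonymous {n m : ℕ} (f : Profile n m → Fin m) : Prop :=
  ∀ (P : Profile n m) (σ : Equiv.Perm (Fin n)), f P = f (fun i => P (σ i))

/-- Neutrality: relabelling the alternatives relabels the outcome accordingly. -/
def Neutral {n m : ℕ} (f : Profile n m → Fin m) : Prop :=
  ∀ (P : Profile n m) (π : Equiv.Perm (Fin m)),
    π (f P) = f (fun i => (P i).trans π)

/-- The minimal position (`0`-indexed, from the bottom) of alternative `x` in profile `P`. -/
noncomputable def minpos {n m : ℕ} (P : Profile n m) (x : Fin m) : ℕ :=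
  ⨅ i : Fin n, ((P i).symm x : ℕ)

/-- The maxmin winners of profile `P`. -/
def MaxminSet {n m : ℕ} (P : Profile n m) : Set (Fin m) :=
  {x | ∀ y, minpos P y ≤ minpos P x}

/-- An `A`-maxmin rule: breaks ties among maxmin winners by a fixed strict linear order. -/
def AMaxmin {n m : ℕ} (f : Profile n m → Fin m) : Prop :=
  ∃ r : Fin m → Fin m → Prop, IsStrictTotalOrder (Fin m) r ∧
    ∀ P : Profile n m, f P ∈ MaxminSet P ∧ ∀ y ∈ MaxminSet P, y ≠ f P → r (f P) y

/-- An `N`-maxmin rule: breaks ties among maxmin winners by a fixed agent's preference. -/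
def NMaxmin {n m : ℕ} (f : Profile n m → Fin m) : Prop :=
  ∃ i : Fin n, ∀ P : Profile n m,
    f P ∈ MaxminSet P ∧ ∀ y ∈ MaxminSet P, y ≠ f P → prefers (P i) (f P) y

/-- The score of alternative `x` in profile `P`, for scores `s` (indexed by position
from the bottom). -/
noncomputable def score {n m : ℕ} (s : Fin m → ℝ) (P : Profile n m) (x : Fin m) : ℝ :=
  ∑ i : Fin n, s ((P i).symm x)

/-- The scoring winners of profile `P`. -/
def ScoreSet {n m : ℕ} (s : Fin m → ℝ) (P : Profile n m) : Set (Fin m) :=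
  {x | ∀ y, score s P y ≤ score s P x}

/-- An `A`-scoring rule: breaks ties among scoring winners by a fixed strict linear order. -/
def AScoring {n m : ℕ} (s : Fin m → ℝ) (f : Profile n m → Fin m) : Prop :=
  ∃ r : Fin m → Fin m → Prop, IsStrictTotalOrder (Fin m) r ∧
    ∀ P : Profile n m, f P ∈ ScoreSet s P ∧ ∀ y ∈ ScoreSet s P, y ≠ f P → r (f P) y

/-- An `N`-scoring rule: breaks ties among scoring winners by a fixed agent's preference. -/
def NScoring {n m : ℕ} (s : Fin m → ℝ) (f : Profile n m → Fin m) : Prop :=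
  ∃ i : Fin n, ∀ P : Profile n m,
    f P ∈ ScoreSet s P ∧ ∀ y ∈ ScoreSet s P, y ≠ f P → prefers (P i) (f P) y

/-- The number of agents preferring `a` to `b` in profile `P`. -/
def numPref {n m : ℕ} (P : Profile n m) (a b : Fin m) : ℕ :=
  (Finset.univ.filter fun i => prefers (P i) a b).card

/-- `a` is a Condorcet winner at `P`. -/
def CondorcetWinner {n m : ℕ} (P : Profile n m) (a : Fin m) : Prop :=
  ∀ b, b ≠ a → numPref P b a < numPref P a b

/-- Condorcet consistency: the rule picks the Condorcet winner whenever one exists. -/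
def CondorcetConsistent {n m : ℕ} (f : Profile n m → Fin m) : Prop :=
  ∀ (P : Profile n m) (a : Fin m), CondorcetWinner P a → f P = a

/-- `p'` is a monotonic transformation of `p` with respect to `a`: all positions up to
(and including) the position of `a` are unchanged. -/
def MonoTransf {m : ℕ} (p p' : Pref m) (a : Fin m) : Prop :=
  ∀ k : Fin m, k ≤ p.symm a → p k = p' k

/-- Monotonicity: an alternative ranked below the outcome by agent `i` cannot become
the outcome after a monotonic transformation of `i`'s preference w.r.t. the outcome. -/
def MonotoneRule {n m : ℕ} (f : Profile n m → Fin m) : Prop :=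
  ∀ (P : Profile n m) (i : Fin n) (b : Fin m), prefers (P i) (f P) b →
    ∀ Pi' : Pref m, MonoTransf (P i) Pi' (f P) → f (update P i Pi') ≠ b

/-- One pairwise majority contest: the challenger `y` beats the incumbent `c` only if
strictly more agents prefer `y` to `c` (ties go to the incumbent, who always comes
earlier in the fixed order). -/
def duel {n m : ℕ} (P : Profile n m) (c y : Fin m) : Fin m :=
  if numPref P c y < numPref P y c then y else c

/-- Run successive pairwise contests starting from incumbent `c` against the listed
challengers in order. -/
def seRun {n m : ℕ} (P : Profile n m) : Fin m → List (Fin m) → Fin m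
  | c, [] => c
  | c, y :: rest => seRun P (duel P c y) rest

/-- The survivor of successive elimination along a list of alternatives (none if empty). -/
def seWinner? {n m : ℕ} (P : Profile n m) : List (Fin m) → Option (Fin m)
  | [] => none
  | c :: rest => some (seRun P c rest)

/-- A successive elimination rule: there is an enumeration `e 0 ≻ e 1 ≻ ⋯ ≻ e (m-1)` of the
alternatives such that the rule outputs the survivor of the sequential pairwise majority
contests (ties resolved in favour of the `≻`-greater, i.e. earlier, alternative). -/
def SuccElim {n m : ℕ} (f : Profile n m → Fin m) : Prop :=
  ∃ e : Fin m ≃ Fin m, ∀ P : Profile n m,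
    seWinner? P ((List.finRange m).map e) = some (f P)

/-- An extended majority voting rule (for two alternatives, with `0` playing the role
of `x`): there is a monotone committee `C` of coalitions such that the outcome is `0`
exactly when the set of agents whose top is `0` is a winning coalition. -/
def ExtMajority {n : ℕ} (f : Profile n 2 → Fin 2) : Prop :=
  ∃ C : Set (Finset (Fin n)),
    (∀ S T : Finset (Fin n), S ∈ C → S ⊂ T → T ∈ C) ∧
    ∀ P : Profile n 2,
      f P = 0 ↔ (Finset.univ.filter fun i => IsBest (P i) (0 : Fin 2)) ∈ C


namespace Stmt2Aux

lemma best0_iff (p : Pref 2) : IsBest p 0 ↔ p = Equiv.swap 0 1 := by revert p; decide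
lemma not_best0_iff (p : Pref 2) : ¬ IsBest p 0 ↔ p = Equiv.refl (Fin 2) := by revert p; decide
lemma prefers10 (p : Pref 2) : prefers p 1 0 ↔ p = Equiv.refl (Fin 2) := by revert p; decide
lemma prefers01 (p : Pref 2) : prefers p 0 1 ↔ p = Equiv.swap 0 1 := by revert p; decide
lemma fin2_cases (x : Fin 2) : x = 0 ∨ x = 1 := by revert x; decide

/-- No-gain (strategy-proofness restated). -/
def NoGain {n : ℕ} (f : Profile n 2 → Fin 2) : Prop :=
  ∀ (i : Fin n) (P : Profile n 2) (Pi' : Pref 2),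
    ¬ prefers (P i) (f (update P i Pi')) (f P)

lemma rftt_iff_nogain {n : ℕ} (f : Profile n 2 → Fin 2) : RFTT f ↔ NoGain f := by
  constructor
  · intro h i P Pi' hpref
    obtain ⟨Q, hQi, hQf, hQp⟩ := h i P Pi' hpref
    rw [hQf] at hQp
    have h1 : ((P i).symm (f P)).val < ((P i).symm (f (update P i Pi'))).val := hpref
    have h2 : ((P i).symm (f (update Q i Pi'))).val < ((P i).symm (f P)).val := hQp
    have := ((P i).symm (f (update P i Pi'))).isLt
    have := ((P i).symm (f (update Q i Pi'))).isLt
    omega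
  · intro h i P Pi' hpref
    exact absurd hpref (h i P Pi')

def profileOf {n : ℕ} (S : Finset (Fin n)) : Profile n 2 :=
  fun i => if i ∈ S then Equiv.swap 0 1 else Equiv.refl (Fin 2)

lemma profile_eq {n : ℕ} (P : Profile n 2) :
    P = profileOf (Finset.univ.filter fun i => IsBest (P i) (0 : Fin 2)) := by
  funext i
  simp only [profileOf, Finset.mem_filter, Finset.mem_univ, true_and]
  by_cases h : IsBest (P i) 0
  · rw [if_pos h]; exact (best0_iff _).1 h
  · rw [if_neg h]; exact (not_best0_iff _).1 h

lemma filter_profileOf {n : ℕ} (S : Finset (Fin n)) :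
    (Finset.univ.filter fun i => IsBest (profileOf S i) (0 : Fin 2)) = S := by
  ext i
  simp only [Finset.mem_filter, Finset.mem_univ, true_and, profileOf]
  by_cases h : i ∈ S
  · simp [h]
    exact Finset.mem_filter.2 ⟨Finset.mem_univ _, by rw [if_pos h]; decide⟩
  · simp [h]
    exact fun hm => (not_best0_iff _).2 (if_neg h) (Finset.mem_filter.1 hm).2

/-- Single-step monotonicity from NoGain. -/
lemma step {n : ℕ} (f : Profile n 2 → Fin 2) (h : NoGain f) (S : Finset (Fin n)) (j : Fin n)
    (h0 : f (profileOf S) = 0) : f (profileOf (insert j S)) = 0 := by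
  by_cases hj : j ∈ S
  · rwa [Finset.insert_eq_self.2 hj]
  · set P := profileOf (insert j S) with hP
    have hupd : update P j (Equiv.refl (Fin 2)) = profileOf S := by
      funext k
      by_cases hk : k = j
      · subst hk; simp [update, profileOf, hj]
      · simp [update, hk, hP, profileOf, Finset.mem_insert, hk]
    have hng := h j P (Equiv.refl (Fin 2))
    rw [hupd, h0] at hng
    rcases fin2_cases (f P) with h1 | h1
    · exact h1
    · exfalso
      apply hng
      rw [h1]
      have hPj : P j = Equiv.swap 0 1 := by simp [hP, profileOf]
      rw [hPj]
      decide

lemma union_mono {n : ℕ} (f : Profile n 2 → Fin 2) (h : NoGain f) (D : Finset (Fin n)) :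
    ∀ S : Finset (Fin n), f (profileOf S) = 0 → f (profileOf (S ∪ D)) = 0 := by
  induction D using Finset.induction_on with
  | empty => intro S h0; simpa using h0
  | insert _ _ _ ih =>
    intro S h0
    rw [Finset.union_insert]
    exact step f h _ _ (ih S h0)

/-- Membership of filter sets under update. -/
lemma filter_update {n : ℕ} (P : Profile n 2) (i : Fin n) (Pi' : Pref 2) :
    (Finset.univ.filter fun k => IsBest ((update P i Pi') k) (0 : Fin 2)) =
      if IsBest Pi' (0 : Fin 2)
      then insert i (Finset.univ.filter fun k => IsBest (P k) (0 : Fin 2))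
      else (Finset.univ.filter fun k => IsBest (P k) (0 : Fin 2)).erase i := by
  ext k
  by_cases hk : k = i
  · subst hk
    by_cases h' : IsBest Pi' (0 : Fin 2) <;>
      simp [h', update, Finset.mem_insert, Finset.mem_erase]
  · by_cases h' : IsBest Pi' (0 : Fin 2) <;>
      simp [h', update, hk, Finset.mem_insert, Finset.mem_erase]

theorem main {n : ℕ} (f : Profile n 2 → Fin 2) : RFTT f ↔ ExtMajority f := by
  rw [rftt_iff_nogain]
  constructor
  · intro h
    refine ⟨{S | f (profileOf S) = 0}, ?_, ?_⟩
    · intro S T hS hST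
      have hsub : S ⊆ T := hST.1
      have := union_mono f h T S hS
      rwa [Finset.union_eq_right.2 hsub] at this
    · intro P
      conv_lhs => rw [profile_eq P]
      exact Iff.rfl
  · rintro ⟨C, hmono, hiff⟩ i P Pi' hpref
    set S := Finset.univ.filter fun k => IsBest (P k) (0 : Fin 2) with hSdef
    have hne : f (update P i Pi') ≠ f P := by
      intro he
      rw [he] at hpref
      exact lt_irrefl _ hpref
    rcases fin2_cases (f P) with hfp | hfp
    · -- f P = 0, f upd = 1; P i must prefer 1 to 0 → P i = refl → i ∉ S
      have hupd1 : f (update P i Pi') = 1 := by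
        rcases fin2_cases (f (update P i Pi')) with h1 | h1
        · exact absurd (h1.trans hfp.symm) hne
        · exact h1
      rw [hupd1, hfp] at hpref
      have hPi : P i = Equiv.refl (Fin 2) := (prefers10 _).1 hpref
      have hiS : i ∉ S := by
        simp [hSdef, hPi]
        decide
      have hS : S ∈ C := (hiff P).1 hfp
      have hPi'best : IsBest Pi' (0 : Fin 2) := by
        by_contra hb
        have : Pi' = Equiv.refl (Fin 2) := (not_best0_iff _).1 hb
        rw [this, ← hPi, update_eq_self] at hupd1
        rw [hfp] at hupd1
        exact absurd hupd1 (by decide)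
      have hSup : (Finset.univ.filter fun k => IsBest ((update P i Pi') k) (0 : Fin 2))
          = insert i S := by rw [filter_update, if_pos hPi'best]
      have : insert i S ∈ C := hmono S _ hS (Finset.ssubset_insert hiS)
      have : f (update P i Pi') = 0 := (hiff _).2 (by rw [hSup]; exact this)
      rw [hupd1] at this
      exact absurd this (by decide)
    · -- f P = 1, f upd = 0; P i prefers 0 to 1 → P i = swap → i ∈ S
      have hupd0 : f (update P i Pi') = 0 := by
        rcases fin2_cases (f (update P i Pi')) with h1 | h1
        · exact h1
        · exact absurd (h1.trans hfp.symm) hne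
      rw [hupd0, hfp] at hpref
      have hPi : P i = Equiv.swap 0 1 := (prefers01 _).1 hpref
      have hiS : i ∈ S := by
        simp [hSdef, hPi]
        decide
      have hPi'nb : ¬ IsBest Pi' (0 : Fin 2) := by
        intro hb
        have : Pi' = Equiv.swap 0 1 := (best0_iff _).1 hb
        rw [this, ← hPi, update_eq_self] at hupd0
        rw [hfp] at hupd0
        exact absurd hupd0 (by decide)
      have hSup : (Finset.univ.filter fun k => IsBest ((update P i Pi') k) (0 : Fin 2))
          = S.erase i := by rw [filter_update, if_neg hPi'nb]
      have hEC : S.erase i ∈ C := by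
        have := (hiff _).1 hupd0
        rwa [hSup] at this
      have hSS : S.erase i ⊂ S := Finset.erase_ssubset hiS
      have : S ∈ C := hmono _ _ hEC hSS
      have : f P = 0 := (hiff P).2 this
      rw [hfp] at this
      exact absurd this (by decide)

end Stmt2Aux

/-- Assume m = 2. A voting rule is regret-free truth-telling if and only if
it is an extended majority voting rule. -/
theorem stmt_2 (n : ℕ) (hn : 2 ≤ n) (f : Profile n 2 → Fin 2) :
    RFTT f ↔ ExtMajority f := by
  exact Stmt2Aux.main f
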